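/- Let (Ω, 𝒜, P) be a probability space with filtration (ℱ_t)_{t≥0}, let (Δ_t)_{t≥1} and (Δ'_t)_{t≥1} be real random variables with Δ_t and Δ'_t ℱ_t-measurable and E[Δ_t | ℱ_{t−1}] = 0, E[Δ'_t | ℱ_{t−1}] = 0 almost surely. Fix b > 0 with |Δ_t| ≤ b almost surely for all t ≥ 1, and a nonnegative sequence (σ_t)_{t≥2} with |Δ_t − Δ'_t| ≤ σ_t almost surely for all t ≥ 2. Let (γ_t)_{t≥2} be in [0,1), set Γ_1 = 1, Γ_t = ∏_{i=2}^{t}(1−γ_i), M_1 = Δ_1, M_t = Δ_t − (1−γ_t)·Δ'_t + (1−γ_t)·M_{t−1}, and define V_1 = b², V_t = (γ_t·b + (1−γ_t)·σ_t)² + (1−γ_t)²·V_{t−1}. Then for every ε > 0 and every T ≥ 1, P(|M_T| ≥ ε) ≤ 2·exp(−ε² / (2·V_T)). -/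

import Mathlib

open MeasureTheory Filter

/-- Pointwise convexity bound: for `|x| ≤ c`, `exp (l*x) ≤ cosh (l*c) + (sinh (l*c)/c) * x`. -/
lemma oeuvre_exp_le_cosh_add_mul {x c l : ℝ} (hc : 0 < c) (hx : |x| ≤ c) :
    Real.exp (l * x) ≤ Real.cosh (l * c) + (Real.sinh (l * c) / c) * x := by
  have hx1 : -c ≤ x := (abs_le.mp hx).1
  have hx2 : x ≤ c := (abs_le.mp hx).2
  set w1 : ℝ := (c - x) / (2 * c) with hw1
  set w2 : ℝ := (c + x) / (2 * c) with hw2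
  have hw1nn : 0 ≤ w1 := by apply div_nonneg <;> linarith
  have hw2nn : 0 ≤ w2 := by apply div_nonneg <;> linarith
  have hsum : w1 + w2 = 1 := by rw [hw1, hw2]; linear_combination mul_inv_cancel₀ hc.ne'
  have hconv := convexOn_exp.2 (Set.mem_univ (l * (-c))) (Set.mem_univ (l * c))
    hw1nn hw2nn hsum
  simp only [smul_eq_mul] at hconv
  have harg : w1 * (l * (-c)) + w2 * (l * c) = l * x := by
    rw [hw1, hw2]; linear_combination l * x * mul_inv_cancel₀ hc.ne'
  rw [harg] at hconv
  refine hconv.trans_eq ?_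
  rw [Real.cosh_eq, Real.sinh_eq]
  have : Real.exp (l * (-c)) = Real.exp (-(l * c)) := by ring_nf
  rw [this]
  rw [hw1, hw2]
  linear_combination (Real.exp (-(l * c)) + Real.exp (l * c)) / 2 * mul_inv_cancel₀ hc.ne'

/-- Conditional Hoeffding lemma: if `E[X | m] = 0` and `|X| ≤ c` a.s., then
`E[exp (l*X) | m] ≤ exp (l² c² / 2)` a.s. -/
lemma oeuvre_cond_hoeffding {Ω : Type*} {m0 : MeasurableSpace Ω} {μ : Measure Ω}
    [IsProbabilityMeasure μ] {m : MeasurableSpace Ω} (hm : m ≤ m0)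
    {X : Ω → ℝ} (hX : AEStronglyMeasurable[m0] X μ) {c : ℝ} (hc : 0 ≤ c)
    (hbd : ∀ᵐ ω ∂μ, |X ω| ≤ c) (hcond : μ[X | m] =ᵐ[μ] 0) (l : ℝ) :
    μ[(fun ω => Real.exp (l * X ω)) | m] ≤ᵐ[μ] fun _ => Real.exp (l ^ 2 * c ^ 2 / 2) := by
  have hXint : Integrable X μ :=
    (integrable_const c).mono' hX (hbd.mono fun ω h => by rwa [Real.norm_eq_abs])
  have hexpint : Integrable (fun ω => Real.exp (l * X ω)) μ := by
    refine (integrable_const (Real.exp (|l| * c))).mono'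
      ((Real.continuous_exp.comp_aestronglyMeasurable (hX.const_mul l))) ?_
    filter_upwards [hbd] with ω h
    rw [Real.norm_eq_abs, abs_of_pos (Real.exp_pos _)]
    exact Real.exp_le_exp.mpr <| (le_abs_self _).trans <| by
      rw [abs_mul]; exact mul_le_mul_of_nonneg_left h (abs_nonneg l)
  rcases eq_or_lt_of_le hc with hc0 | hcpos
  · -- c = 0 : X = 0 a.e.
    have hX0 : X =ᵐ[μ] 0 := by
      filter_upwards [hbd] with ω h
      have : |X ω| ≤ 0 := by rwa [hc0]
      simpa using le_antisymm this (abs_nonneg _)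
    have h1 : (fun ω => Real.exp (l * X ω)) =ᵐ[μ] fun _ => (1 : ℝ) := by
      filter_upwards [hX0] with ω h; simp [h]
    calc μ[(fun ω => Real.exp (l * X ω)) | m] =ᵐ[μ] μ[(fun _ => (1:ℝ)) | m] :=
          condExp_congr_ae h1
      _ =ᵐ[μ] fun _ => (1:ℝ) := Filter.EventuallyEq.of_eq (condExp_const hm (1:ℝ))
      _ ≤ᵐ[μ] fun _ => Real.exp (l ^ 2 * c ^ 2 / 2) := by
          refine Eventually.of_forall fun ω => ?_
          rw [← Real.exp_zero]
          exact Real.exp_le_exp.mpr (by positivity)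
  · -- c > 0
    set A : ℝ := Real.cosh (l * c)
    set B : ℝ := Real.sinh (l * c) / c
    have haff : Integrable (fun ω => A + B * X ω) μ :=
      (integrable_const A).add (hXint.const_mul B)
    have hmono : (fun ω => Real.exp (l * X ω)) ≤ᵐ[μ] fun ω => A + B * X ω := by
      filter_upwards [hbd] with ω h
      exact oeuvre_exp_le_cosh_add_mul hcpos h
    have h1 : μ[(fun ω => Real.exp (l * X ω)) | m] ≤ᵐ[μ] μ[(fun ω => A + B * X ω) | m] :=
      condExp_mono hexpint haff hmono
    have h2 : μ[(fun ω => A + B * X ω) | m] =ᵐ[μ] fun _ => A := by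
      have hadd := condExp_add (μ := μ) (m := m) (integrable_const A) (hXint.const_mul B)
      have hsmul : μ[(fun ω => B * X ω) | m] =ᵐ[μ] fun ω => B * (μ[X | m]) ω := by
        exact condExp_smul (μ := μ) (m := m) B X
      calc μ[(fun ω => A + B * X ω) | m]
          =ᵐ[μ] μ[(fun _ => A) | m] + μ[(fun ω => B * X ω) | m] := hadd
        _ =ᵐ[μ] (fun _ => A) + fun ω => B * (μ[X | m]) ω :=
            (Filter.EventuallyEq.of_eq (condExp_const hm A)).add hsmul
        _ =ᵐ[μ] fun _ => A := by
            filter_upwards [hcond] with ω h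
            simp [Pi.add_apply, h]
    have h3 : A ≤ Real.exp (l ^ 2 * c ^ 2 / 2) := by
      refine (Real.cosh_le_exp_half_sq (l * c)).trans_eq ?_
      congr 1; ring
    calc μ[(fun ω => Real.exp (l * X ω)) | m] ≤ᵐ[μ] μ[(fun ω => A + B * X ω) | m] := h1
      _ =ᵐ[μ] fun _ => A := h2
      _ ≤ᵐ[μ] fun _ => Real.exp (l ^ 2 * c ^ 2 / 2) := Eventually.of_forall fun _ => h3

/-- MGF step: multiply a nonnegative bounded `m`-measurable factor by `exp (l*X)`. -/
lemma oeuvre_mgf_step {Ω : Type*} {m0 : MeasurableSpace Ω} {μ : Measure Ω}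
    [IsProbabilityMeasure μ] {m : MeasurableSpace Ω} (hm : m ≤ m0)
    {g X : Ω → ℝ} (hg : StronglyMeasurable[m] g) (hgnn : ∀ ω, 0 ≤ g ω)
    {K : ℝ} (hgbd : ∀ᵐ ω ∂μ, g ω ≤ K)
    (hX : AEStronglyMeasurable[m0] X μ) {c : ℝ} (hc : 0 ≤ c)
    (hbd : ∀ᵐ ω ∂μ, |X ω| ≤ c) (hcond : μ[X | m] =ᵐ[μ] 0) (l : ℝ) :
    ∫ ω, g ω * Real.exp (l * X ω) ∂μ
      ≤ Real.exp (l ^ 2 * c ^ 2 / 2) * ∫ ω, g ω ∂μ := by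
  have hgbd' : ∀ᵐ ω ∂μ, ‖g ω‖ ≤ K := by
    filter_upwards [hgbd] with ω h
    rw [Real.norm_eq_abs, abs_of_nonneg (hgnn ω)]; exact h
  have hgm0 : AEStronglyMeasurable[m0] g μ := (hg.mono hm).aestronglyMeasurable
  have hgint : Integrable g μ := (integrable_const K).mono' hgm0 hgbd'
  have hexpint : Integrable (fun ω => Real.exp (l * X ω)) μ := by
    refine (integrable_const (Real.exp (|l| * c))).mono'
      ((Real.continuous_exp.comp_aestronglyMeasurable (hX.const_mul l))) ?_
    filter_upwards [hbd] with ω h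
    rw [Real.norm_eq_abs, abs_of_pos (Real.exp_pos _)]
    exact Real.exp_le_exp.mpr <| (le_abs_self _).trans <| by
      rw [abs_mul]; exact mul_le_mul_of_nonneg_left h (abs_nonneg l)
  have hprodint : Integrable (fun ω => g ω * Real.exp (l * X ω)) μ :=
    hexpint.bdd_mul hgm0 hgbd'
  have hpull : μ[(fun ω => g ω * Real.exp (l * X ω)) | m]
      =ᵐ[μ] fun ω => g ω * (μ[(fun ω' => Real.exp (l * X ω')) | m]) ω := by
    have := condExp_stronglyMeasurable_mul_of_bound hm hg hexpint K hgbd'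
    exact this
  have hcexp := oeuvre_cond_hoeffding hm hX hc hbd hcond l
  have hcondint : Integrable (μ[(fun ω => Real.exp (l * X ω)) | m]) μ := integrable_condExp
  calc ∫ ω, g ω * Real.exp (l * X ω) ∂μ
      = ∫ ω, (μ[(fun ω' => g ω' * Real.exp (l * X ω')) | m]) ω ∂μ :=
        (integral_condExp hm).symm
    _ = ∫ ω, g ω * (μ[(fun ω' => Real.exp (l * X ω')) | m]) ω ∂μ :=
        integral_congr_ae hpull
    _ ≤ ∫ ω, g ω * Real.exp (l ^ 2 * c ^ 2 / 2) ∂μ := by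
        refine integral_mono_ae (hcondint.bdd_mul hgm0 hgbd')
          (hgint.mul_const _) ?_
        filter_upwards [hcexp] with ω h
        exact mul_le_mul_of_nonneg_left h (hgnn ω)
    _ = Real.exp (l ^ 2 * c ^ 2 / 2) * ∫ ω, g ω ∂μ := by
        rw [integral_mul_const]; ring

/-- Fixed-time Azuma–Hoeffding concentration for the centered OEUVRE process:
with `|Δ_t| ≤ b`, `|Δ_t - Δ'_t| ≤ σ_t`, and the variance recursion
`V₁ = b²`, `V_t = (γ_t b + (1-γ_t) σ_t)² + (1-γ_t)² V_{t-1}`, for every `ε > 0`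
and `T ≥ 1`, `P(|M_T| ≥ ε) ≤ 2 exp(-ε²/(2 V_T))`. -/
theorem oeuvre_fixed_time_concentration
    {Ω : Type*} {m0 : MeasurableSpace Ω} {μ : Measure Ω} [IsProbabilityMeasure μ]
    (ℱ : Filtration ℕ m0)
    (Δ Δ' : ℕ → Ω → ℝ) (γ σ : ℕ → ℝ) (b : ℝ) (hb : 0 < b)
    (hΔmeas : ∀ t ≥ 1, StronglyMeasurable[ℱ t] (Δ t))
    (hΔ'meas : ∀ t ≥ 1, StronglyMeasurable[ℱ t] (Δ' t))
    (hΔcond : ∀ t ≥ 1, μ[Δ t | ℱ (t - 1)] =ᵐ[μ] 0)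
    (hΔ'cond : ∀ t ≥ 1, μ[Δ' t | ℱ (t - 1)] =ᵐ[μ] 0)
    (hΔbd : ∀ t ≥ 1, ∀ᵐ ω ∂μ, |Δ t ω| ≤ b)
    (hσnn : ∀ t ≥ 2, 0 ≤ σ t)
    (hstab : ∀ t ≥ 2, ∀ᵐ ω ∂μ, |Δ t ω - Δ' t ω| ≤ σ t)
    (hγ : ∀ t ≥ 2, γ t ∈ Set.Ico (0 : ℝ) 1)
    (Γ : ℕ → ℝ) (hΓ : ∀ t ≥ 1, Γ t = ∏ i ∈ Finset.Icc 2 t, (1 - γ i))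
    (M : ℕ → Ω → ℝ)
    (hM1 : M 1 = Δ 1)
    (hMrec : ∀ t ≥ 2, ∀ ω,
      M t ω = Δ t ω - (1 - γ t) * Δ' t ω + (1 - γ t) * M (t - 1) ω)
    (V : ℕ → ℝ) (hV1 : V 1 = b ^ 2)
    (hVrec : ∀ t ≥ 2,
      V t = (γ t * b + (1 - γ t) * σ t) ^ 2 + (1 - γ t) ^ 2 * V (t - 1)) :
    ∀ ε > (0 : ℝ), ∀ T ≥ 1,
      μ {ω | ε ≤ |M T ω|} ≤ ENNReal.ofReal (2 * Real.exp (-ε ^ 2 / (2 * V T))) := by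
  -- Main induction: measurability, a.e. bound, positivity of V, and MGF bound.
  have main : ∀ T ≥ 1, StronglyMeasurable[ℱ T] (M T) ∧
      (∃ K, 0 ≤ K ∧ ∀ᵐ ω ∂μ, |M T ω| ≤ K) ∧ 0 < V T ∧
      ∀ l : ℝ, ∫ ω, Real.exp (l * M T ω) ∂μ ≤ Real.exp (l ^ 2 * V T / 2) := by
    intro T hT
    induction T, hT using Nat.le_induction with
    | base =>
      refine ⟨hM1 ▸ hΔmeas 1 le_rfl, ⟨b, hb.le, by simpa [hM1] using hΔbd 1 le_rfl⟩,
        by rw [hV1]; positivity, fun l => ?_⟩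
      have hXm0 : AEStronglyMeasurable (Δ 1) μ :=
        ((hΔmeas 1 le_rfl).mono (ℱ.le 1)).aestronglyMeasurable
      have := oeuvre_mgf_step (μ := μ) (ℱ.le 0) (g := fun _ => (1:ℝ))
        (stronglyMeasurable_const) (fun _ => zero_le_one) (K := 1)
        (Eventually.of_forall fun _ => le_rfl) hXm0 hb.le (hΔbd 1 le_rfl)
        (by simpa using hΔcond 1 le_rfl) l
      simpa [hM1, hV1] using this
    | succ t ht ih =>
      obtain ⟨ihmeas, ⟨K, hK0, hKbd⟩, ihV, ihmgf⟩ := ih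
      set s := t + 1 with hs
      have hs2 : 2 ≤ s := by omega
      have hs1 : 1 ≤ s := by omega
      have hγs := hγ s hs2
      have hγ0 : 0 ≤ γ s := hγs.1
      have hγ1 : γ s < 1 := hγs.2
      have h1γ : 0 < 1 - γ s := by linarith
      set c : ℝ := γ s * b + (1 - γ s) * σ s with hc
      have hcnn : 0 ≤ c := by
        have := hσnn s hs2
        positivity
      set D : Ω → ℝ := fun ω => Δ s ω - (1 - γ s) * Δ' s ω with hD
      have hst1 : s - 1 = t := by omega
      have hMs : M s = fun ω => D ω + (1 - γ s) * M t ω := by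
        funext ω
        rw [hMrec s hs2 ω, hst1]
      -- bound on D
      have hDbd : ∀ᵐ ω ∂μ, |D ω| ≤ c := by
        filter_upwards [hΔbd s hs1, hstab s hs2] with ω h1 h2
        have : D ω = γ s * Δ s ω + (1 - γ s) * (Δ s ω - Δ' s ω) := by
          simp only [hD]; ring
        rw [this]
        calc |γ s * Δ s ω + (1 - γ s) * (Δ s ω - Δ' s ω)|
            ≤ |γ s * Δ s ω| + |(1 - γ s) * (Δ s ω - Δ' s ω)| := abs_add_le _ _
          _ ≤ γ s * b + (1 - γ s) * σ s := by
              rw [abs_mul, abs_mul, abs_of_nonneg hγ0, abs_of_pos h1γ]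
              exact add_le_add (mul_le_mul_of_nonneg_left h1 hγ0)
                (mul_le_mul_of_nonneg_left h2 h1γ.le)
      -- integrability of Δ s and Δ' s
      have hΔm0 : AEStronglyMeasurable (Δ s) μ :=
        ((hΔmeas s hs1).mono (ℱ.le s)).aestronglyMeasurable
      have hΔ'm0 : AEStronglyMeasurable (Δ' s) μ :=
        ((hΔ'meas s hs1).mono (ℱ.le s)).aestronglyMeasurable
      have hΔint : Integrable (Δ s) μ :=
        (integrable_const b).mono' hΔm0
          ((hΔbd s hs1).mono fun ω h => by rwa [Real.norm_eq_abs])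
      have hΔ'int : Integrable (Δ' s) μ := by
        refine (integrable_const (b + σ s)).mono' hΔ'm0 ?_
        filter_upwards [hΔbd s hs1, hstab s hs2] with ω h1 h2
        rw [Real.norm_eq_abs]
        calc |Δ' s ω| = |Δ s ω - (Δ s ω - Δ' s ω)| := by ring_nf
          _ ≤ |Δ s ω| + |Δ s ω - Δ' s ω| := abs_sub _ _
          _ ≤ b + σ s := add_le_add h1 h2
      -- conditional expectation of D is zero
      have hDcond : μ[D | ℱ t] =ᵐ[μ] 0 := by
        have hsub := condExp_sub (μ := μ) (m := ℱ t) hΔint (hΔ'int.const_mul (1 - γ s))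
        have hsmul : μ[(fun ω => (1 - γ s) * Δ' s ω) | ℱ t]
            =ᵐ[μ] fun ω => (1 - γ s) * (μ[Δ' s | ℱ t]) ω := by
          exact condExp_smul (μ := μ) (m := ℱ t) (1 - γ s) (Δ' s)
        have hc1 : μ[Δ s | ℱ t] =ᵐ[μ] 0 := by
          have := hΔcond s hs1; rwa [hst1] at this
        have hc2 : μ[Δ' s | ℱ t] =ᵐ[μ] 0 := by
          have := hΔ'cond s hs1; rwa [hst1] at this
        have : μ[D | ℱ t] =ᵐ[μ] μ[Δ s | ℱ t] - μ[(fun ω => (1 - γ s) * Δ' s ω) | ℱ t] := by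
          exact hsub
        calc μ[D | ℱ t] =ᵐ[μ] μ[Δ s | ℱ t] - μ[(fun ω => (1 - γ s) * Δ' s ω) | ℱ t] := this
          _ =ᵐ[μ] 0 := by
            filter_upwards [hc1, hc2, hsmul] with ω h1 h2 h3
            simp [Pi.sub_apply, h1, h3, h2]
      -- measurability of M s
      have hMsmeas : StronglyMeasurable[ℱ s] (M s) := by
        rw [hMs]
        exact (((hΔmeas s hs1).sub ((hΔ'meas s hs1).const_mul _)).add
          (((ihmeas.mono (ℱ.mono (Nat.le_succ t))).const_mul _)))
      -- a.e. bound on M s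
      have hMsbd : ∀ᵐ ω ∂μ, |M s ω| ≤ c + (1 - γ s) * K := by
        filter_upwards [hDbd, hKbd] with ω h1 h2
        rw [hMs]
        calc |D ω + (1 - γ s) * M t ω| ≤ |D ω| + |(1 - γ s) * M t ω| := abs_add_le _ _
          _ ≤ c + (1 - γ s) * K := by
              rw [abs_mul, abs_of_pos h1γ]
              exact add_le_add h1 (mul_le_mul_of_nonneg_left h2 h1γ.le)
      -- V s
      have hVs : V s = c ^ 2 + (1 - γ s) ^ 2 * V t := by
        rw [hVrec s hs2, hst1]
      have hVspos : 0 < V s := by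
        rw [hVs]; positivity
      refine ⟨hMsmeas, ⟨c + (1 - γ s) * K, by positivity, hMsbd⟩, hVspos, fun l => ?_⟩
      -- MGF bound
      have hDm0 : AEStronglyMeasurable D μ := hΔm0.sub (hΔ'm0.const_mul _)
      set g : Ω → ℝ := fun ω => Real.exp (l * (1 - γ s) * M t ω) with hg
      have hgmeas : StronglyMeasurable[ℱ t] g :=
        Real.continuous_exp.comp_stronglyMeasurable (ihmeas.const_mul _)
      have hgbd : ∀ᵐ ω ∂μ, g ω ≤ Real.exp (|l * (1 - γ s)| * K) := by
        filter_upwards [hKbd] with ω h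
        refine Real.exp_le_exp.mpr ?_
        calc l * (1 - γ s) * M t ω ≤ |l * (1 - γ s) * M t ω| := le_abs_self _
          _ = |l * (1 - γ s)| * |M t ω| := abs_mul _ _
          _ ≤ |l * (1 - γ s)| * K := mul_le_mul_of_nonneg_left h (abs_nonneg _)
      have hstep := oeuvre_mgf_step (μ := μ) (ℱ.le t) hgmeas
        (fun ω => (Real.exp_pos _).le) hgbd hDm0 hcnn hDbd hDcond l
      have heq : ∀ ω, Real.exp (l * M s ω) = g ω * Real.exp (l * D ω) := by
        intro ω
        rw [hMs, ← Real.exp_add]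
        congr 1; ring
      have hIH := ihmgf (l * (1 - γ s))
      calc ∫ ω, Real.exp (l * M s ω) ∂μ
          = ∫ ω, g ω * Real.exp (l * D ω) ∂μ := by
            exact integral_congr_ae (Eventually.of_forall heq)
        _ ≤ Real.exp (l ^ 2 * c ^ 2 / 2) * ∫ ω, g ω ∂μ := by
            simpa [mul_comm] using hstep
        _ ≤ Real.exp (l ^ 2 * c ^ 2 / 2) * Real.exp ((l * (1 - γ s)) ^ 2 * V t / 2) := by
            have : ∫ ω, g ω ∂μ = ∫ ω, Real.exp ((l * (1 - γ s)) * M t ω) ∂μ := rfl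
            rw [this]
            exact mul_le_mul_of_nonneg_left hIH (Real.exp_pos _).le
        _ = Real.exp (l ^ 2 * V s / 2) := by
            rw [← Real.exp_add, hVs]
            congr 1; ring
  -- Now the Chernoff argument.
  intro ε hε T hT
  obtain ⟨hMmeas, ⟨K, hK0, hKbd⟩, hVpos, hmgf⟩ := main T hT
  set lam : ℝ := ε / V T with hlam
  have hlampos : 0 < lam := div_pos hε hVpos
  have key : ∀ l : ℝ, l ^ 2 = lam ^ 2 →
      μ {ω | Real.exp (lam * ε) ≤ Real.exp (l * M T ω)}
        ≤ ENNReal.ofReal (Real.exp (-ε ^ 2 / (2 * V T))) := by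
    intro l hl2
    set f : Ω → ℝ := fun ω => Real.exp (l * M T ω) with hf
    have hfm0 : AEStronglyMeasurable f μ :=
      Real.continuous_exp.comp_aestronglyMeasurable
        (((hMmeas.mono (ℱ.le T)).aestronglyMeasurable).const_mul l)
    have hfint : Integrable f μ := by
      refine (integrable_const (Real.exp (|l| * K))).mono' hfm0 ?_
      filter_upwards [hKbd] with ω h
      rw [Real.norm_eq_abs, abs_of_pos (Real.exp_pos _)]
      exact Real.exp_le_exp.mpr <| (le_abs_self _).trans <| by
        rw [abs_mul]; exact mul_le_mul_of_nonneg_left h (abs_nonneg l)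
    have hmarkov := mul_meas_ge_le_integral_of_nonneg
      (Eventually.of_forall fun ω => (Real.exp_pos (l * M T ω)).le) hfint
      (Real.exp (lam * ε))
    have hub : ∫ ω, f ω ∂μ ≤ Real.exp (lam ^ 2 * V T / 2) := by
      have := hmgf l; rwa [hl2] at this
    have hexp : Real.exp (lam ^ 2 * V T / 2) / Real.exp (lam * ε)
        = Real.exp (-ε ^ 2 / (2 * V T)) := by
      rw [← Real.exp_sub]
      congr 1
      rw [hlam]
      field_simp
      ring
    have htoReal : (μ {ω | Real.exp (lam * ε) ≤ f ω}).toReal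
        ≤ Real.exp (-ε ^ 2 / (2 * V T)) := by
      rw [← hexp, le_div_iff₀ (Real.exp_pos _)]
      calc (μ {ω | Real.exp (lam * ε) ≤ f ω}).toReal * Real.exp (lam * ε)
          = Real.exp (lam * ε) * (μ {ω | Real.exp (lam * ε) ≤ f ω}).toReal := by ring
        _ ≤ ∫ ω, f ω ∂μ := hmarkov
        _ ≤ Real.exp (lam ^ 2 * V T / 2) := hub
    calc μ {ω | Real.exp (lam * ε) ≤ f ω}
        = ENNReal.ofReal ((μ {ω | Real.exp (lam * ε) ≤ f ω}).toReal) :=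
          (ENNReal.ofReal_toReal (measure_ne_top μ _)).symm
      _ ≤ ENNReal.ofReal (Real.exp (-ε ^ 2 / (2 * V T))) :=
          ENNReal.ofReal_le_ofReal htoReal
  have hsub : {ω | ε ≤ |M T ω|} ⊆
      {ω | Real.exp (lam * ε) ≤ Real.exp (lam * M T ω)} ∪
      {ω | Real.exp (lam * ε) ≤ Real.exp ((-lam) * M T ω)} := by
    intro ω hω
    simp only [Set.mem_setOf_eq] at hω
    rcases le_abs.mp hω with h | h
    · left
      exact Real.exp_le_exp.mpr (mul_le_mul_of_nonneg_left h hlampos.le)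
    · right
      show Real.exp (lam * ε) ≤ Real.exp ((-lam) * M T ω)
      exact Real.exp_le_exp.mpr (by nlinarith)
  calc μ {ω | ε ≤ |M T ω|}
      ≤ μ ({ω | Real.exp (lam * ε) ≤ Real.exp (lam * M T ω)} ∪
          {ω | Real.exp (lam * ε) ≤ Real.exp ((-lam) * M T ω)}) := measure_mono hsub
    _ ≤ μ {ω | Real.exp (lam * ε) ≤ Real.exp (lam * M T ω)} +
        μ {ω | Real.exp (lam * ε) ≤ Real.exp ((-lam) * M T ω)} := measure_union_le _ _
    _ ≤ ENNReal.ofReal (Real.exp (-ε ^ 2 / (2 * V T))) +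
        ENNReal.ofReal (Real.exp (-ε ^ 2 / (2 * V T))) :=
        add_le_add (key lam rfl) (key (-lam) (by ring))
    _ = ENNReal.ofReal (2 * Real.exp (-ε ^ 2 / (2 * V T))) := by
        rw [← ENNReal.ofReal_add (Real.exp_pos _).le (Real.exp_pos _).le]
        congr 1; ring
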